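/- arXiv:0910.0777 — 5 statements merged into one kernel-verified Lean document; each statement's English description precedes it below -/
import Mathlib

section
/- Let p and w be nonnegative real-valued functions on a finite set, let OPT be a subset with total weight w(OPT) <= k, and let S_1,...,S_{l+1} be disjoint subsets such that for each i, letting U_{i-1} = S_1 ∪ ... ∪ S_{i-1}, the ratio p(S_i)/w(S_i) is at least beta times the ratio p(Y)/w(Y) for every part Y of some partition of OPT \ U_{i-1}. Then for each i, p(S_i) >= beta * (w(S_i)/k) * (p(OPT) - p(U_{i-1})). -/
/-- Greedy step lemma: if each S_i beats, up to a factor β, the profit-to-weight ratio of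
every part of some partition of OPT \ U_{i-1}, then
p(S_i) ≥ β (w(S_i)/k) (p(OPT) - p(U_{i-1})). -/
theorem stmt_3 {α : Type*} [DecidableEq α] (p w : α → ℝ)
    (hp : ∀ a, 0 ≤ p a) (hw : ∀ a, 0 ≤ w a)
    (k β : ℝ) (hk : 0 < k) (hβ : 0 < β)
    (OPT : Finset α) (hOPT : ∑ a ∈ OPT, w a ≤ k)
    (l : ℕ) (S : Fin (l + 1) → Finset α)
    (hdisj : ∀ i j, i ≠ j → Disjoint (S i) (S j))
    (hSpos : ∀ i, 0 < ∑ a ∈ S i, w a)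
    (hgreedy : ∀ i : Fin (l + 1), ∃ 𝒴 : Finset (Finset α),
      (∀ Y ∈ 𝒴, Y.Nonempty) ∧ (∀ Y ∈ 𝒴, 0 < ∑ a ∈ Y, w a) ∧
      ((𝒴 : Set (Finset α)).PairwiseDisjoint id) ∧
      (𝒴.biUnion id = OPT \ (Finset.univ.filter (fun j => j < i)).biUnion S) ∧
      ∀ Y ∈ 𝒴, (∑ a ∈ S i, p a) / (∑ a ∈ S i, w a) ≥
        β * ((∑ a ∈ Y, p a) / (∑ a ∈ Y, w a))) :
    ∀ i : Fin (l + 1),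
      ∑ a ∈ S i, p a ≥ β * ((∑ a ∈ S i, w a) / k) *
        ((∑ a ∈ OPT, p a) -
          ∑ a ∈ (Finset.univ.filter (fun j => j < i)).biUnion S, p a) := by
  intro i
  obtain ⟨𝒴, hne, hwpos, hpd, hbi, hratio⟩ := hgreedy i
  set U := (Finset.univ.filter (fun j => j < i)).biUnion S with hU
  set R := OPT \ U with hR
  set wS := ∑ a ∈ S i, w a with hwS
  set pS := ∑ a ∈ S i, p a with hpS
  have hwSpos : 0 < wS := hSpos i
  have hpSnn : 0 ≤ pS := Finset.sum_nonneg fun a _ => hp a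
  clear_value wS pS
  -- sum over the partition
  have hsump : ∑ Y ∈ 𝒴, ∑ a ∈ Y, p a = ∑ a ∈ R, p a := by
    rw [← hbi, Finset.sum_biUnion hpd]; rfl
  have hsumw : ∑ Y ∈ 𝒴, ∑ a ∈ Y, w a = ∑ a ∈ R, w a := by
    rw [← hbi, Finset.sum_biUnion hpd]; rfl
  -- key inequality per part
  have hkey : ∀ Y ∈ 𝒴, β * (∑ a ∈ Y, p a) * wS ≤ pS * (∑ a ∈ Y, w a) := by
    intro Y hY
    have h := hratio Y hY
    have hwY := hwpos Y hY
    rw [ge_iff_le, ← mul_div_assoc, div_le_div_iff₀ hwY hwSpos] at h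
    linarith
  have hsumkey : β * (∑ a ∈ R, p a) * wS ≤ pS * (∑ a ∈ R, w a) := by
    calc β * (∑ a ∈ R, p a) * wS = ∑ Y ∈ 𝒴, β * (∑ a ∈ Y, p a) * wS := by
          rw [← hsump, Finset.mul_sum, Finset.sum_mul]
      _ ≤ ∑ Y ∈ 𝒴, pS * (∑ a ∈ Y, w a) := Finset.sum_le_sum hkey
      _ = pS * (∑ a ∈ R, w a) := by rw [← hsumw, Finset.mul_sum]
  -- weight of R is at most k
  have hwR : ∑ a ∈ R, w a ≤ k :=
    le_trans (Finset.sum_le_sum_of_subset_of_nonneg (Finset.sdiff_subset)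
      (fun a _ _ => hw a)) hOPT
  have hwRnn : 0 ≤ ∑ a ∈ R, w a := Finset.sum_nonneg fun a _ => hw a
  -- profit of R vs OPT minus U
  have hpR : (∑ a ∈ OPT, p a) - (∑ a ∈ U, p a) ≤ ∑ a ∈ R, p a := by
    have h1 : R = OPT \ (OPT ∩ U) := by
      rw [hR, Finset.sdiff_inter_self_left]
    have h2 : ∑ a ∈ R, p a = (∑ a ∈ OPT, p a) - ∑ a ∈ OPT ∩ U, p a := by
      rw [h1, Finset.sum_sdiff_eq_sub Finset.inter_subset_left]
    have h3 : ∑ a ∈ OPT ∩ U, p a ≤ ∑ a ∈ U, p a :=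
      Finset.sum_le_sum_of_subset_of_nonneg Finset.inter_subset_right
        (fun a _ _ => hp a)
    linarith
  have hpRnn : 0 ≤ ∑ a ∈ R, p a := Finset.sum_nonneg fun a _ => hp a
  -- combine
  rw [ge_iff_le, ← mul_div_assoc, div_mul_eq_mul_div, div_le_iff₀ hk]
  nlinarith [mul_le_mul_of_nonneg_left hwR hpSnn,
    mul_le_mul_of_nonneg_right hpR (le_of_lt (mul_pos hβ hwSpos))]
end

section
/- Let G be an undirected graph with connected components G_1,...,G_t listed in decreasing order of size, and let k <= |V(G)|. The maximum size of a 1-neighbour set of size at most k equals: k, unless either (a) every component has size exactly 2 and k is odd, in which case it is k-1, or (b) k = 1 and every component has size at least 2, in which case it is 0. -/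
namespace OneNbr
open Classical
set_option linter.unusedSectionVars false
variable {V : Type*} [Fintype V] (G : SimpleGraph V)

lemma cross_lemma {U : Finset V} : ∀ {a b : V}, G.Walk a b → a ∈ U → b ∉ U →
    ∃ u ∈ U, ∃ v, v ∉ U ∧ G.Adj u v := by
  intro a b p
  induction p with
  | nil => intro h h'; exact absurd h h'
  | @cons a c b h q ih =>
    intro ha hb
    by_cases hc : c ∈ U
    · exact ih hc hb
    · exact ⟨a, ha, c, hc, h⟩

lemma adj_of_reachable_ne {a b : V} (h : G.Reachable a b) (hne : a ≠ b) : ∃ w, G.Adj a w := by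
  obtain ⟨p⟩ := h
  cases p with
  | nil => exact absurd rfl hne
  | cons h q => exact ⟨_, h⟩

example {a b : V} (h : G.connectedComponentMk a = G.connectedComponentMk b) : G.Reachable a b :=
  SimpleGraph.ConnectedComponent.exact h

example {a b : V} (h : G.Adj a b) : G.connectedComponentMk a = G.connectedComponentMk b :=
  SimpleGraph.ConnectedComponent.sound h.reachable

example (c : G.ConnectedComponent) : c.supp.ncard = c.supp.toFinset.card :=
  Set.ncard_eq_toFinset_card' _

example (c : G.ConnectedComponent) {v : V} : v ∈ c.supp ↔ G.connectedComponentMk v = c :=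
  SimpleGraph.ConnectedComponent.mem_supp_iff _ _

example (c : G.ConnectedComponent) : c.supp.Nonempty := by
  obtain ⟨v, rfl⟩ := c.exists_rep
  exact ⟨v, rfl⟩

lemma comp_subset2 (c : G.ConnectedComponent) :
    ∀ j, 2 ≤ j → j ≤ c.supp.ncard →
    ∃ U : Finset V, (∀ v ∈ U, v ∈ c.supp) ∧ (∀ v ∈ U, ∃ w ∈ U, G.Adj v w) ∧ U.card = j := by
  have hcard : c.supp.ncard = c.supp.toFinset.card := Set.ncard_eq_toFinset_card' _
  intro j h2
  induction j, h2 using Nat.le_induction with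
  | base =>
    intro hle
    rw [hcard] at hle
    obtain ⟨a, ha⟩ := (Finset.card_pos (s := c.supp.toFinset)).mp (by omega)
    obtain ⟨b, hb, hne⟩ := Finset.exists_mem_ne (s := c.supp.toFinset) (by omega) a
    rw [Set.mem_toFinset] at ha hb
    have hreach : G.Reachable a b := by
      apply SimpleGraph.ConnectedComponent.exact
      rw [SimpleGraph.ConnectedComponent.mem_supp_iff] at ha hb
      rw [ha, hb]
    obtain ⟨p⟩ := hreach
    cases p with
    | nil => exact absurd rfl hne.symm
    | @cons _ w _ h q =>
      have hw : w ∈ c.supp := by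
        rw [SimpleGraph.ConnectedComponent.mem_supp_iff] at ha ⊢
        rw [← ha]
        exact (SimpleGraph.ConnectedComponent.sound h.reachable).symm
      refine ⟨{a, w}, ?_, ?_, ?_⟩
      · intro v hv
        rcases Finset.mem_insert.mp hv with rfl | hv
        · exact ha
        · rw [Finset.mem_singleton] at hv; subst hv; exact hw
      · intro v hv
        rcases Finset.mem_insert.mp hv with rfl | hv
        · exact ⟨w, by simp, h⟩
        · rw [Finset.mem_singleton] at hv; subst hv
          exact ⟨a, by simp, h.symm⟩
      · rw [Finset.card_pair h.ne]
  | succ n hn ih =>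
    intro hle
    obtain ⟨U, hsupp, hfeas, hc⟩ := ih (by omega)
    have hUsub : U ⊆ c.supp.toFinset := fun v hv => Set.mem_toFinset.mpr (hsupp v hv)
    have hx : (c.supp.toFinset \ U).Nonempty := by
      rw [← Finset.card_pos, Finset.card_sdiff_of_subset hUsub]
      omega
    obtain ⟨x, hx⟩ := hx
    rw [Finset.mem_sdiff, Set.mem_toFinset] at hx
    obtain ⟨y, hy⟩ := Finset.card_pos.mp (by omega : 0 < U.card)
    have hreach : G.Reachable y x := by
      apply SimpleGraph.ConnectedComponent.exact
      have h1 := (SimpleGraph.ConnectedComponent.mem_supp_iff _ _).mp (hsupp y hy)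
      have h2 := (SimpleGraph.ConnectedComponent.mem_supp_iff _ _).mp hx.1
      rw [h1, h2]
    obtain ⟨p⟩ := hreach
    obtain ⟨u, hu, v, hv, hadj⟩ := cross_lemma G p hy hx.2
    refine ⟨insert v U, ?_, ?_, ?_⟩
    · intro w hw
      rcases Finset.mem_insert.mp hw with rfl | hw
      · rw [SimpleGraph.ConnectedComponent.mem_supp_iff]
        rw [← (SimpleGraph.ConnectedComponent.mem_supp_iff _ _).mp (hsupp u hu)]
        exact (SimpleGraph.ConnectedComponent.sound hadj.reachable).symm
      · exact hsupp w hw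
    · intro w hw
      rcases Finset.mem_insert.mp hw with rfl | hw
      · exact ⟨u, Finset.mem_insert_of_mem hu, hadj.symm⟩
      · obtain ⟨z, hz, hz'⟩ := hfeas w hw
        exact ⟨z, Finset.mem_insert_of_mem hz, hz'⟩
    · rw [Finset.card_insert_of_notMem hv]; omega

lemma comp_subset (c : G.ConnectedComponent) (j : ℕ) (hj : j ≤ c.supp.ncard)
    (hj1 : j = 1 → c.supp.ncard = 1) :
    ∃ U : Finset V, (∀ v ∈ U, v ∈ c.supp) ∧
      (∀ v ∈ U, (∃ w ∈ U, G.Adj v w) ∨ ∀ w, ¬ G.Adj v w) ∧ U.card = j := by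
  match j, hj1 with
  | 0, _ => exact ⟨∅, by simp, by simp, by simp⟩
  | 1, hj1 =>
    have h1 := hj1 rfl
    obtain ⟨v, hv⟩ := c.exists_rep
    have hvs : v ∈ c.supp := hv
    refine ⟨{v}, by simpa using hvs, ?_, by simp⟩
    intro u hu
    rw [Finset.mem_singleton] at hu; subst hu
    right
    intro w hw
    have hws : w ∈ c.supp := by
      rw [SimpleGraph.ConnectedComponent.mem_supp_iff, ← (SimpleGraph.ConnectedComponent.mem_supp_iff c u).mp hvs]
      exact (SimpleGraph.ConnectedComponent.sound hw.reachable).symm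
    have : 1 < c.supp.ncard := (Set.one_lt_ncard (Set.toFinite _)).mpr ⟨u, hvs, w, hws, hw.ne⟩
    omega
  | (n+2), _ =>
    obtain ⟨U, h1, h2, h3⟩ := comp_subset2 G c (n+2) (by omega) hj
    exact ⟨U, h1, fun v hv => Or.inl (h2 v hv), h3⟩

lemma pick (m S k : ℕ) (e1 e2 : Prop) (hm : 1 ≤ m) (hk : k ≤ m + S)
    (h1 : k = 1 → m = 1 ∨ e1) (h2 : k % 2 = 1 → m ≠ 2 ∨ e2)
    (he1S : e1 → 1 ≤ S) (hne1 : ¬e1 → S ≠ 1) (h12 : ¬e1 → e2 → 3 ≤ S)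
    (hne2 : ¬e2 → S % 2 = 0) (he12 : e1 → e2) :
    ∃ j, j ≤ m ∧ j ≤ k ∧ (j = 1 → m = 1) ∧ k - j ≤ S ∧
      (k - j = 1 → e1) ∧ ((k - j) % 2 = 1 → e2) := by
  by_cases e1h : e1
  · -- e1 true, hence e2 true
    have e2h := he12 e1h
    have hS := he1S e1h
    by_cases hc : k = 1 ∧ m ≠ 1
    · exact ⟨0, by omega, by omega, by omega, by omega, fun _ => e1h, fun _ => e2h⟩
    · exact ⟨min m k, by omega, by omega, by omega, by omega, fun _ => e1h, fun _ => e2h⟩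
  · by_cases e2h : e2
    · -- ¬e1, e2 : need k - j ≠ 1
      have hS := h12 e1h e2h
      have h1' : k = 1 → m = 1 := fun h => (h1 h).resolve_right e1h
      by_cases hkm : k ≤ m
      · exact ⟨k, by omega, le_rfl, fun h => h1' (by omega), by omega,
          fun h => absurd h (by omega), fun _ => e2h⟩
      · by_cases hk1 : k - m = 1
        · by_cases hm3 : 3 ≤ m
          · exact ⟨m - 1, by omega, by omega, by omega, by omega,
              fun h => absurd h (by omega), fun _ => e2h⟩
          · exact ⟨0, by omega, by omega, by omega, by omega,
              fun h => absurd h (by omega), fun _ => e2h⟩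
        · exact ⟨m, le_rfl, by omega, fun h => by omega, by omega,
            fun h => absurd h (by omega), fun _ => e2h⟩
    · -- ¬e1, ¬e2 : need k - j even
      have hS := hne2 e2h
      have hS1 := hne1 e1h
      have h1' : k = 1 → m = 1 := fun h => (h1 h).resolve_right e1h
      have h2' : k % 2 = 1 → m ≠ 2 := fun h => (h2 h).resolve_right e2h
      by_cases hkp : k % 2 = 1
      · have hm2 : m ≠ 2 := h2' hkp
        by_cases hkm : k ≤ m
        · exact ⟨k, by omega, le_rfl, fun h => h1' (by omega), by omega,
            fun h => absurd h (by omega), fun h => absurd h (by omega)⟩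
        · by_cases hme : m % 2 = 0
          · exact ⟨m - 1, by omega, by omega, by omega, by omega,
              fun h => absurd h (by omega), fun h => absurd h (by omega)⟩
          · exact ⟨m, le_rfl, by omega, by omega, by omega,
              fun h => absurd h (by omega), fun h => absurd h (by omega)⟩
      · by_cases hkm : k ≤ m
        · exact ⟨k, by omega, le_rfl, fun h => h1' (by omega), by omega,
            fun h => absurd h (by omega), fun h => absurd h (by omega)⟩
        · by_cases hme : m % 2 = 0
          · exact ⟨m, le_rfl, by omega, by omega, by omega,
              fun h => absurd h (by omega), fun h => absurd h (by omega)⟩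
          · exact ⟨m - 1, by omega, by omega, by omega, by omega,
              fun h => absurd h (by omega), fun h => absurd h (by omega)⟩

lemma numeric {ι : Type*} [DecidableEq ι] (f : ι → ℕ) (s : Finset ι) :
    ∀ k : ℕ, (∀ i ∈ s, 1 ≤ f i) → k ≤ ∑ i ∈ s, f i →
    (k = 1 → ∃ i ∈ s, f i = 1) → (k % 2 = 1 → ∃ i ∈ s, f i ≠ 2) →
    ∃ g : ι → ℕ, (∀ i, g i ≤ f i) ∧ (∀ i, g i = 1 → f i = 1) ∧ ∑ i ∈ s, g i = k := by
  induction s using Finset.induction_on with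
  | empty =>
    intro k _ hle _ _
    simp at hle
    exact ⟨fun _ => 0, fun i => Nat.zero_le _, fun i h => absurd h (by simp), by simp [hle]⟩
  | @insert a s ha ih =>
    intro k hf hle h1 h2
    have hfa : 1 ≤ f a := hf a (Finset.mem_insert_self a s)
    rw [Finset.sum_insert ha] at hle
    set S := ∑ i ∈ s, f i with hSdef
    have c1 : k = 1 → f a = 1 ∨ (∃ i ∈ s, f i = 1) := by
      intro hk
      rcases h1 hk with ⟨i, hi, hfi⟩
      rcases Finset.mem_insert.mp hi with rfl | hi'
      · exact Or.inl hfi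
      · exact Or.inr ⟨i, hi', hfi⟩
    have c2 : k % 2 = 1 → f a ≠ 2 ∨ (∃ i ∈ s, f i ≠ 2) := by
      intro hk
      rcases h2 hk with ⟨i, hi, hfi⟩
      rcases Finset.mem_insert.mp hi with rfl | hi'
      · exact Or.inl hfi
      · exact Or.inr ⟨i, hi', hfi⟩
    have c3 : (∃ i ∈ s, f i = 1) → 1 ≤ S := by
      rintro ⟨i, hi, hfi⟩
      calc 1 = f i := hfi.symm
        _ ≤ S := Finset.single_le_sum (fun j _ => Nat.zero_le _) hi
    have c4 : ¬(∃ i ∈ s, f i = 1) → S ≠ 1 := by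
      intro hno hS1
      push_neg at hno
      obtain ⟨i, hi⟩ : s.Nonempty := by
        by_contra hemp
        rw [Finset.not_nonempty_iff_eq_empty] at hemp
        rw [hSdef, hemp] at hS1
        simp at hS1
      have ha1 := hf i (Finset.mem_insert_of_mem hi)
      have ha2 := hno i hi
      have ha3 : f i ≤ S := Finset.single_le_sum (fun j _ => Nat.zero_le _) hi
      omega
    have c5 : ¬(∃ i ∈ s, f i = 1) → (∃ i ∈ s, f i ≠ 2) → 3 ≤ S := by
      intro hno hex
      push_neg at hno
      obtain ⟨i, hi, hfi⟩ := hex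
      have ha1 := hf i (Finset.mem_insert_of_mem hi)
      have ha2 := hno i hi
      have ha3 : f i ≤ S := Finset.single_le_sum (fun j _ => Nat.zero_le _) hi
      omega
    have c6 : ¬(∃ i ∈ s, f i ≠ 2) → S % 2 = 0 := by
      intro hno
      push_neg at hno
      have hv : S = ∑ i ∈ s, 2 := Finset.sum_congr rfl (fun i hi => hno i hi)
      rw [Finset.sum_const, smul_eq_mul] at hv
      omega
    have c7 : (∃ i ∈ s, f i = 1) → (∃ i ∈ s, f i ≠ 2) := by
      rintro ⟨i, hi, hfi⟩
      exact ⟨i, hi, by omega⟩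
    obtain ⟨j, hjm, hjk, hj1, hjS, hj1', hj2'⟩ :=
      pick (f a) S k (∃ i ∈ s, f i = 1) (∃ i ∈ s, f i ≠ 2) hfa hle c1 c2 c3 c4 c5 c6 c7
    obtain ⟨g, hg1, hg2, hg3⟩ := ih (k - j) (fun i hi => hf i (Finset.mem_insert_of_mem hi))
      hjS hj1' hj2'
    refine ⟨Function.update g a j, ?_, ?_, ?_⟩
    · intro i
      by_cases hia : i = a
      · subst hia; rw [Function.update_self]; omega
      · rw [Function.update_of_ne hia]; exact hg1 i
    · intro i
      by_cases hia : i = a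
      · subst hia; rw [Function.update_self]; intro h; exact hj1 h
      · rw [Function.update_of_ne hia]; exact hg2 i
    · rw [Finset.sum_insert ha, Function.update_self]
      rw [Finset.sum_congr rfl (fun i hi => Function.update_of_ne (by rintro rfl; exact ha hi) j g)]
      clear c1 c2 c3 c4 c5 c6 c7 hj1' hj2' hj1 h1 h2
      omega

lemma supp_filter [Fintype G.ConnectedComponent] (c : G.ConnectedComponent) :
    c.supp.toFinset = Finset.univ.filter (fun v => G.connectedComponentMk v = c) := by
  ext v
  simp [SimpleGraph.ConnectedComponent.mem_supp_iff]

lemma sum_supp [Fintype G.ConnectedComponent] :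
    ∑ c : G.ConnectedComponent, c.supp.ncard = Fintype.card V := by
  have h := Finset.card_eq_sum_card_fiberwise
    (f := fun v : V => G.connectedComponentMk v) (s := Finset.univ) (t := Finset.univ)
    (fun v _ => Finset.mem_univ _)
  rw [← Finset.card_univ, h]
  refine Finset.sum_congr rfl (fun c _ => ?_)
  rw [Set.ncard_eq_toFinset_card', supp_filter]

-- assume previous lemmas; test exists_feasible skeleton with sorries for them
lemma supp_one (c : G.ConnectedComponent) : 1 ≤ c.supp.ncard := by
  obtain ⟨v, rfl⟩ := c.exists_rep
  have : (v : V) ∈ (G.connectedComponentMk v).supp := rfl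
  have hfin : (G.connectedComponentMk v).supp.Finite := Set.toFinite _
  exact Set.ncard_pos hfin |>.mpr ⟨v, this⟩

lemma exists_feasible (k : ℕ) (hk : k ≤ Fintype.card V)
    (h1 : k = 1 → ∃ c : G.ConnectedComponent, c.supp.ncard = 1)
    (h2 : k % 2 = 1 → ∃ c : G.ConnectedComponent, c.supp.ncard ≠ 2) :
    ∃ U : Finset V, (∀ v ∈ U, (∃ w ∈ U, G.Adj v w) ∨ ∀ w, ¬ G.Adj v w) ∧ U.card = k := by
  classical
  haveI : Fintype G.ConnectedComponent := Fintype.ofFinite _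
  obtain ⟨g, hg1, hg2, hg3⟩ := numeric (fun c : G.ConnectedComponent => c.supp.ncard)
    Finset.univ k (fun c _ => supp_one G c) (by rw [sum_supp]; exact hk)
    (fun h => (h1 h).imp (fun c hc => ⟨Finset.mem_univ c, hc⟩))
    (fun h => (h2 h).imp (fun c hc => ⟨Finset.mem_univ c, hc⟩))
  choose Uc hUc1 hUc2 hUc3 using fun c : G.ConnectedComponent =>
    comp_subset G c (g c) (hg1 c) (hg2 c)
  refine ⟨Finset.univ.biUnion Uc, ?_, ?_⟩
  · intro v hv
    obtain ⟨c, _, hvc⟩ := Finset.mem_biUnion.mp hv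
    rcases hUc2 c v hvc with ⟨w, hw, hadj⟩ | hiso
    · exact Or.inl ⟨w, Finset.mem_biUnion.mpr ⟨c, Finset.mem_univ c, hw⟩, hadj⟩
    · exact Or.inr hiso
  · rw [Finset.card_biUnion, ← hg3]
    · exact Finset.sum_congr rfl (fun c _ => hUc3 c)
    · intro c _ c' _ hne
      simp only [Finset.disjoint_left]
      intro v hv hv'
      have h1 := (SimpleGraph.ConnectedComponent.mem_supp_iff _ _).mp (hUc1 c v hv)
      have h2 := (SimpleGraph.ConnectedComponent.mem_supp_iff _ _).mp (hUc1 c' v hv')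
      exact hne (h1 ▸ h2 ▸ rfl)

lemma exists_adj_of_big {v : V} (h : 2 ≤ (G.connectedComponentMk v).supp.ncard) :
    ∃ w, G.Adj v w := by
  have hv : v ∈ (G.connectedComponentMk v).supp := rfl
  obtain ⟨u, hu, hne⟩ := Set.exists_ne_of_one_lt_ncard (s := (G.connectedComponentMk v).supp) (by omega) v
  have hr : G.Reachable v u :=
    SimpleGraph.ConnectedComponent.exact ((SimpleGraph.ConnectedComponent.mem_supp_iff _ _).mp hu).symm
  exact adj_of_reachable_ne G hr hne.symm

lemma even_card (h : ∀ c : G.ConnectedComponent, c.supp.ncard = 2) (U : Finset V)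
    (hU : ∀ v ∈ U, (∃ w ∈ U, G.Adj v w) ∨ ∀ w, ¬ G.Adj v w) : U.card % 2 = 0 := by
  classical
  haveI : Fintype G.ConnectedComponent := Fintype.ofFinite _
  rw [Finset.card_eq_sum_card_fiberwise (f := fun v => G.connectedComponentMk v)
    (t := Finset.univ) (fun v _ => Finset.mem_univ _), Finset.sum_nat_mod]
  have key : ∀ c : G.ConnectedComponent,
      (U.filter (fun v => G.connectedComponentMk v = c)).card % 2 = 0 := by
    intro c
    set t := U.filter (fun v => G.connectedComponentMk v = c) with ht
    rcases Finset.eq_empty_or_nonempty t with he | ⟨v, hv⟩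
    · simp [he]
    · rw [Finset.mem_filter] at hv
      obtain ⟨hvU, hvc⟩ := hv
      rcases hU v hvU with ⟨w, hwU, hadj⟩ | hiso
      · have hwc : G.connectedComponentMk w = c := by
          rw [← hvc]
          exact (SimpleGraph.ConnectedComponent.sound hadj.reachable).symm
        have hwt : w ∈ t := Finset.mem_filter.mpr ⟨hwU, hwc⟩
        have hvt : v ∈ t := Finset.mem_filter.mpr ⟨hvU, hvc⟩
        have hsub : t ⊆ c.supp.toFinset := by
          intro x hx
          rw [supp_filter]
          exact Finset.mem_filter.mpr ⟨Finset.mem_univ _, (Finset.mem_filter.mp hx).2⟩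
        have hle : t.card ≤ 2 := by
          have := Finset.card_le_card hsub
          rw [← Set.ncard_eq_toFinset_card', h c] at this
          exact this
        have hge : 2 ≤ t.card := by
          have hsub2 : {v, w} ⊆ t := by
            intro x hx
            rcases Finset.mem_insert.mp hx with rfl | hx
            · exact hvt
            · rw [Finset.mem_singleton] at hx; subst hx; exact hwt
          have := Finset.card_le_card hsub2
          rwa [Finset.card_pair hadj.ne] at this
        omega
      · exfalso
        have h2 : 2 ≤ (G.connectedComponentMk v).supp.ncard := by rw [h _]
        obtain ⟨w, hw⟩ := exists_adj_of_big G h2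
        exact hiso w hw
  calc (∑ c : G.ConnectedComponent,
        (U.filter (fun v => G.connectedComponentMk v = c)).card % 2) % 2
      = (∑ _c : G.ConnectedComponent, 0) % 2 := by
        rw [Finset.sum_congr rfl (fun c _ => key c)]
    _ = 0 := by simp

lemma no_single (h : ∀ c : G.ConnectedComponent, 2 ≤ c.supp.ncard) (U : Finset V)
    (hU : ∀ v ∈ U, (∃ w ∈ U, G.Adj v w) ∨ ∀ w, ¬ G.Adj v w) : U.card ≠ 1 := by
  intro h1
  obtain ⟨v, hv⟩ := Finset.card_eq_one.mp h1
  subst hv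
  rcases hU v (Finset.mem_singleton_self v) with ⟨w, hw, hadj⟩ | hiso
  · rw [Finset.mem_singleton] at hw
    subst hw
    exact G.loopless.irrefl _ hadj
  · obtain ⟨w, hw⟩ := exists_adj_of_big G (h _)
    exact hiso w hw

end OneNbr

open Classical in
/-- The maximum size of a 1-neighbour set of size at most k in an undirected graph equals
k, unless every connected component has size exactly 2 and k is odd (in which case it is
k - 1), or k = 1 and every component has size at least 2 (in which case it is 0). -/
theorem stmt_12 {V : Type*} [Fintype V] (G : SimpleGraph V)
    (k : ℕ) (hk : k ≤ Fintype.card V) :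
    IsGreatest {n : ℕ | ∃ U : Finset V,
        (∀ v ∈ U, (∃ w ∈ U, G.Adj v w) ∨ ∀ w, ¬ G.Adj v w) ∧
        U.card ≤ k ∧ U.card = n}
      (if (∀ c : G.ConnectedComponent, c.supp.ncard = 2) ∧ Odd k then k - 1
       else if k = 1 ∧ (∀ c : G.ConnectedComponent, 2 ≤ c.supp.ncard) then 0
       else k) := by
  classical
  constructor
  · -- membership
    split_ifs with hA hB
    · obtain ⟨hall, hodd⟩ := hA
      have hodd' : k % 2 = 1 := Nat.odd_iff.mp hodd
      obtain ⟨U, hfeas, hcard⟩ := OneNbr.exists_feasible G (k - 1) (by omega)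
        (fun h => absurd h (by omega)) (fun h => absurd h (by omega))
      exact ⟨U, hfeas, by omega, hcard⟩
    · exact ⟨∅, by simp, by simp, by simp⟩
    · have h1 : k = 1 → ∃ c : G.ConnectedComponent, c.supp.ncard = 1 := by
        intro hk1
        have : ¬ (∀ c : G.ConnectedComponent, 2 ≤ c.supp.ncard) := fun h => hB ⟨hk1, h⟩
        push_neg at this
        obtain ⟨c, hc⟩ := this
        have := OneNbr.supp_one G c
        exact ⟨c, by omega⟩
      have h2 : k % 2 = 1 → ∃ c : G.ConnectedComponent, c.supp.ncard ≠ 2 := by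
        intro hkodd
        by_contra hno
        push_neg at hno
        exact hA ⟨fun c => hno c, Nat.odd_iff.mpr hkodd⟩
      obtain ⟨U, hfeas, hcard⟩ := OneNbr.exists_feasible G k hk h1 h2
      exact ⟨U, hfeas, le_of_eq hcard, hcard⟩
  · -- upper bound
    rintro n ⟨U, hfeas, hle, hcard⟩
    split_ifs with hA hB
    · have heven := OneNbr.even_card G hA.1 U hfeas
      have hodd' : k % 2 = 1 := Nat.odd_iff.mp hA.2
      omega
    · have := OneNbr.no_single G hB.2 U hfeas
      omega
    · omega
end

section
/- Let r, r_1, ..., r_m, w_1, ..., w_m, and P be nonnegative reals with each w_j > 0, and suppose sets S and S* satisfy: p'(v) = floor(p(v) / (eps*P/n)) for all items v, S maximizes adjusted profit-to-weight ratio among feasible sets, and |S*| <= n. Then the true profit-to-weight ratio of S satisfies r(S) >= r(S*) - eps * P / w(S*). -/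
/-- Scaled-profit lemma for the knapsack FPTAS: if S maximizes the adjusted
profit-to-weight ratio (with adjusted profits p'(v) = ⌊p(v)·n/(ε·P)⌋) against S*,
and both sets have at most n items, then r(S) ≥ r(S*) - ε·P / w(S*). -/
theorem stmt_15 {α : Type*} (n : ℕ) (hn : 0 < n) (eps P : ℝ)
    (heps : 0 < eps) (hP : 0 < P)
    (p w : α → ℝ) (hp0 : ∀ a, 0 ≤ p a) (hpP : ∀ a, p a ≤ P) (hw : ∀ a, 0 < w a)
    (S Sstar : Finset α) (hS : S.Nonempty) (hSstar : Sstar.Nonempty)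
    (hScard : S.card ≤ n) (hSstarcard : Sstar.card ≤ n)
    (hratio : (∑ v ∈ S, (⌊p v * n / (eps * P)⌋ : ℝ)) / ∑ v ∈ S, w v ≥
              (∑ v ∈ Sstar, (⌊p v * n / (eps * P)⌋ : ℝ)) / ∑ v ∈ Sstar, w v) :
    (∑ v ∈ S, p v) / ∑ v ∈ S, w v ≥
      (∑ v ∈ Sstar, p v) / ∑ v ∈ Sstar, w v - eps * P / ∑ v ∈ Sstar, w v := by
  set c : ℝ := eps * P / n with hc
  have hcpos : 0 < c := by positivity
  have hwS : (0:ℝ) < ∑ v ∈ S, w v :=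
    Finset.sum_pos (fun v _ => hw v) hS
  have hwT : (0:ℝ) < ∑ v ∈ Sstar, w v :=
    Finset.sum_pos (fun v _ => hw v) hSstar
  -- termwise bounds
  have hlow : ∀ v, c * (⌊p v * n / (eps * P)⌋ : ℝ) ≤ p v := by
    intro v
    have h1 : (⌊p v * n / (eps * P)⌋ : ℝ) ≤ p v * n / (eps * P) := Int.floor_le _
    have hne : eps * P ≠ 0 := by positivity
    have hnne : (n:ℝ) ≠ 0 := by exact_mod_cast hn.ne'
    calc c * (⌊p v * n / (eps * P)⌋ : ℝ) ≤ c * (p v * n / (eps * P)) := by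
          exact mul_le_mul_of_nonneg_left h1 hcpos.le
      _ = p v := by rw [hc]; field_simp
  have hhigh : ∀ v, p v - c ≤ c * (⌊p v * n / (eps * P)⌋ : ℝ) := by
    intro v
    have h1 : p v * n / (eps * P) - 1 ≤ (⌊p v * n / (eps * P)⌋ : ℝ) :=
      le_of_lt (Int.sub_one_lt_floor _)
    have hnne : (n:ℝ) ≠ 0 := by exact_mod_cast hn.ne'
    have := mul_le_mul_of_nonneg_left h1 hcpos.le
    calc p v - c = c * (p v * n / (eps * P) - 1) := by
          rw [hc]; field_simp
      _ ≤ c * (⌊p v * n / (eps * P)⌋ : ℝ) := this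
  have hSsum : c * (∑ v ∈ S, (⌊p v * n / (eps * P)⌋ : ℝ)) ≤ ∑ v ∈ S, p v := by
    rw [Finset.mul_sum]
    exact Finset.sum_le_sum fun v _ => hlow v
  have hTsum : (∑ v ∈ Sstar, p v) - eps * P ≤
      c * (∑ v ∈ Sstar, (⌊p v * n / (eps * P)⌋ : ℝ)) := by
    rw [Finset.mul_sum]
    have h1 : ∑ v ∈ Sstar, (p v - c) ≤
        ∑ v ∈ Sstar, c * (⌊p v * n / (eps * P)⌋ : ℝ) :=
      Finset.sum_le_sum fun v _ => hhigh v
    have h2 : (∑ v ∈ Sstar, p v) - eps * P ≤ ∑ v ∈ Sstar, (p v - c) := by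
      rw [Finset.sum_sub_distrib, Finset.sum_const, nsmul_eq_mul]
      have : (Sstar.card : ℝ) * c ≤ n * c := by
        apply mul_le_mul_of_nonneg_right _ hcpos.le
        exact_mod_cast hSstarcard
      have hnc : (n:ℝ) * c = eps * P := by
        have hnne : (n:ℝ) ≠ 0 := by exact_mod_cast hn.ne'
        rw [hc]; field_simp
      linarith
    linarith
  -- combine
  have hmid : c * (∑ v ∈ Sstar, (⌊p v * n / (eps * P)⌋ : ℝ)) / (∑ v ∈ Sstar, w v) ≤
      c * (∑ v ∈ S, (⌊p v * n / (eps * P)⌋ : ℝ)) / (∑ v ∈ S, w v) := by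
    rw [mul_div_assoc, mul_div_assoc]
    exact mul_le_mul_of_nonneg_left hratio hcpos.le
  have h1 : c * (∑ v ∈ S, (⌊p v * n / (eps * P)⌋ : ℝ)) / (∑ v ∈ S, w v) ≤
      (∑ v ∈ S, p v) / (∑ v ∈ S, w v) := by gcongr
  have h2 : ((∑ v ∈ Sstar, p v) - eps * P) / (∑ v ∈ Sstar, w v) ≤
      c * (∑ v ∈ Sstar, (⌊p v * n / (eps * P)⌋ : ℝ)) / (∑ v ∈ Sstar, w v) :=
    by gcongr
  have := (h2.trans hmid).trans h1
  rw [sub_div] at this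
  linarith
end

section
/- Let D be a finite DAG and let L, P, T partition its nodes (large, petite, tiny). Let X be a subset of L, let D_X be the sub-DAG induced by P ∪ X, and let Z be the union of the tiny sinks of D and the petite sinks of D_X. If X contains all large nodes reachable from a node u, then u can reach some node of X ∪ Z. -/
/-- In a finite DAG with nodes partitioned into large (L), petite (Pe), and tiny (T) nodes,
with X ⊆ L and Z the union of the tiny sinks of D with the petite sinks of the sub-DAG
induced by Pe ∪ X: if every large node reachable from u lies in X, then u reaches some
node of X ∪ Z. -/
theorem stmt_16 {V : Type*} [Fintype V] (D : V → V → Prop)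
    (hacyc : ∀ v, ¬ Relation.TransGen D v v)
    (L Pe T : Set V)
    (hpart : ∀ v, (v ∈ L ∧ v ∉ Pe ∧ v ∉ T) ∨ (v ∉ L ∧ v ∈ Pe ∧ v ∉ T) ∨
      (v ∉ L ∧ v ∉ Pe ∧ v ∈ T))
    (X : Set V) (hX : X ⊆ L)
    (Z : Set V)
    (hZ : Z = {v | v ∈ T ∧ ∀ w, ¬ D v w} ∪
          {v | v ∈ Pe ∧ ∀ w ∈ Pe ∪ X, ¬ D v w})
    (u : V)
    (hu : ∀ v, Relation.ReflTransGen D u v → v ∈ L → v ∈ X) :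
    ∃ z ∈ X ∪ Z, Relation.ReflTransGen D u z := by
  have hwf : WellFounded (fun a b : V => Relation.TransGen D b a) := by
    letI : IsTrans V (fun a b : V => Relation.TransGen D b a) :=
      ⟨fun a b c h1 h2 => h2.trans h1⟩
    letI : IsIrrefl V (fun a b : V => Relation.TransGen D b a) :=
      ⟨fun a h => hacyc a h⟩
    exact Finite.wellFounded_of_trans_of_irrefl _
  revert hu
  induction u using hwf.induction with
  | _ u ih =>
    intro hu
    rcases hpart u with ⟨hL, -, -⟩ | ⟨-, hPe, -⟩ | ⟨-, -, hT⟩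
    · exact ⟨u, Or.inl (hu u Relation.ReflTransGen.refl hL), Relation.ReflTransGen.refl⟩
    · by_cases hsink : ∀ w ∈ Pe ∪ X, ¬ D u w
      · exact ⟨u, Or.inr (hZ ▸ Or.inr ⟨hPe, hsink⟩), Relation.ReflTransGen.refl⟩
      · push_neg at hsink
        obtain ⟨w, -, hw⟩ := hsink
        obtain ⟨z, hz, hrz⟩ := ih w (Relation.TransGen.single hw)
          (fun v hv => hu v ((Relation.ReflTransGen.single hw).trans hv))
        exact ⟨z, hz, (Relation.ReflTransGen.single hw).trans hrz⟩
    · by_cases hsink : ∀ w, ¬ D u w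
      · exact ⟨u, Or.inr (hZ ▸ Or.inl ⟨hT, hsink⟩), Relation.ReflTransGen.refl⟩
      · push_neg at hsink
        obtain ⟨w, hw⟩ := hsink
        obtain ⟨z, hz, hrz⟩ := ih w (Relation.TransGen.single hw)
          (fun v hv => hu v ((Relation.ReflTransGen.single hw).trans hv))
        exact ⟨z, hz, (Relation.ReflTransGen.single hw).trans hrz⟩
end

section
/- Let G be an undirected bipartite graph G = (U ∪ V, E) where each vertex of U has profit 1 and weight 0 and each vertex of V has profit 0 and weight 1. Then for any integer k >= 1, the maximum profit of a 1-neighbour set of total weight at most k equals the maximum, over subsets R of V with |R| <= k, of |N(R)|, the number of vertices of U having a neighbour in R, provided every vertex of U has at least one neighbour in V. -/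
/-- In a bipartite graph with sides A (profit 1, weight 0) and B (profit 0, weight 1),
where every vertex of A has a neighbour in B, the maximum profit of a 1-neighbour set of
total weight at most k equals the maximum coverage of A by at most k vertices of B. -/
theorem stmt_19 {W : Type*} [Fintype W] [DecidableEq W] (G : SimpleGraph W)
    [DecidableRel G.Adj] (A B : Finset W)
    (hpart : ∀ x : W, (x ∈ A ∧ x ∉ B) ∨ (x ∉ A ∧ x ∈ B))
    (hbip : ∀ x y, G.Adj x y → (x ∈ A ∧ y ∈ B) ∨ (x ∈ B ∧ y ∈ A))
    (hcov : ∀ u ∈ A, ∃ v ∈ B, G.Adj u v)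
    (k : ℕ) (hk : 1 ≤ k) :
    sSup {n : ℕ | ∃ W' : Finset W,
        (∀ v ∈ W', (∃ x ∈ W', G.Adj v x) ∨ ∀ x, ¬ G.Adj v x) ∧
        (W' ∩ B).card ≤ k ∧ n = (W' ∩ A).card} =
    sSup {n : ℕ | ∃ R : Finset W, R ⊆ B ∧ R.card ≤ k ∧
        n = (A.filter fun u => ∃ r ∈ R, G.Adj u r).card} := by
  have hAB : ∀ x : W, x ∈ A → x ∉ B := by
    intro x hx hxB
    rcases hpart x with ⟨_, h⟩ | ⟨h, _⟩ <;> exact h (by assumption)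
  have hBA : ∀ x : W, x ∈ B → x ∉ A := by
    intro x hx hxA
    rcases hpart x with ⟨_, h⟩ | ⟨h, _⟩ <;> exact h (by assumption)
  have hbddL : BddAbove {n : ℕ | ∃ W' : Finset W,
      (∀ v ∈ W', (∃ x ∈ W', G.Adj v x) ∨ ∀ x, ¬ G.Adj v x) ∧
      (W' ∩ B).card ≤ k ∧ n = (W' ∩ A).card} := by
    refine ⟨A.card, ?_⟩
    rintro n ⟨W', _, _, rfl⟩
    exact Finset.card_le_card Finset.inter_subset_right
  have hbddR : BddAbove {n : ℕ | ∃ R : Finset W, R ⊆ B ∧ R.card ≤ k ∧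
      n = (A.filter fun u => ∃ r ∈ R, G.Adj u r).card} := by
    refine ⟨A.card, ?_⟩
    rintro n ⟨R, _, _, rfl⟩
    exact Finset.card_le_card (Finset.filter_subset _ _)
  apply le_antisymm
  · apply csSup_le
    · exact ⟨0, ∅, by simp⟩
    · rintro n ⟨W', h1, h2, rfl⟩
      have hsub : W' ∩ A ⊆ A.filter fun u => ∃ r ∈ W' ∩ B, G.Adj u r := by
        intro v hv
        rw [Finset.mem_inter] at hv
        rcases h1 v hv.1 with ⟨x, hxW, hadj⟩ | hiso
        · have hxB : x ∈ B := by
            rcases hbip v x hadj with ⟨_, h⟩ | ⟨h, _⟩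
            · exact h
            · exact absurd hv.2 (hBA v h)
          exact Finset.mem_filter.2 ⟨hv.2, x, Finset.mem_inter.2 ⟨hxW, hxB⟩, hadj⟩
        · obtain ⟨w, _, hw⟩ := hcov v hv.2
          exact absurd hw (hiso w)
      calc (W' ∩ A).card ≤ (A.filter fun u => ∃ r ∈ W' ∩ B, G.Adj u r).card :=
            Finset.card_le_card hsub
        _ ≤ _ := le_csSup hbddR ⟨W' ∩ B, Finset.inter_subset_right, h2, rfl⟩
  · apply csSup_le
    · exact ⟨0, ∅, by simp⟩
    · rintro n ⟨R, hRB, hRk, rfl⟩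
      set F := A.filter fun u => ∃ r ∈ R, G.Adj u r with hF
      apply le_csSup hbddL
      refine ⟨R ∪ F, ?_, ?_, ?_⟩
      · intro v hv
        rcases Finset.mem_union.1 hv with hvR | hvF
        · by_cases hex : ∃ x, G.Adj v x
          · obtain ⟨x, hx⟩ := hex
            have hxA : x ∈ A := by
              rcases hbip v x hx with ⟨h, _⟩ | ⟨_, h⟩
              · exact absurd h (hBA v (hRB hvR))
              · exact h
            left
            refine ⟨x, Finset.mem_union_right _ ?_, hx⟩
            exact Finset.mem_filter.2 ⟨hxA, v, hvR, hx.symm⟩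
          · right; push_neg at hex; exact hex
        · obtain ⟨_, r, hrR, hadj⟩ := Finset.mem_filter.1 hvF
          exact Or.inl ⟨r, Finset.mem_union_left _ hrR, hadj⟩
      · have : (R ∪ F) ∩ B = R := by
          ext x
          simp only [Finset.mem_inter, Finset.mem_union]
          constructor
          · rintro ⟨hx1 | hx1, hxB⟩
            · exact hx1
            · exact absurd (Finset.mem_filter.1 hx1).1 (hBA x hxB)
          · intro hx; exact ⟨Or.inl hx, hRB hx⟩
        rw [this]; exact hRk
      · have : (R ∪ F) ∩ A = F := by
          ext x
          simp only [Finset.mem_inter, Finset.mem_union]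
          constructor
          · rintro ⟨hx1 | hx1, hxA⟩
            · exact absurd hxA (hBA x (hRB hx1))
            · exact hx1
          · intro hx; exact ⟨Or.inr hx, (Finset.mem_filter.1 hx).1⟩
        rw [this]
end
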